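/- arXiv:2106.08196 — 2 statements merged into one kernel-verified Lean document; each statement's English description precedes it below -/
import Mathlib

section
/- Let T : ℓ¹ → ℓ¹ be a continuous linear operator such that the sequence z = (T(e_n)) converges to zero pointwise on ℕ (i.e., (T e_n)(k) → 0 as n → ∞ for each k), where (e_n) is the standard unit vector basis of ℓ¹. Then for every bounded sequence x = (x_n) in ℓ¹ converging to zero pointwise on ℕ, the sequence (T(x_n)) is bounded and converges to zero pointwise on ℕ. -/
open Filter Set
set_option maxHeartbeats 1000000

noncomputable def dsub (x : ℕ → lp (fun _ : ℕ => ℝ) 1) (A : Set ℕ) : ℝ :=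
  Filter.limsup (fun n => ∑' j : A, |x n j|) Filter.atTop

def IsBddSeq (x : ℕ → lp (fun _ : ℕ => ℝ) 1) : Prop := ∃ C : ℝ, ∀ n, ‖x n‖ ≤ C

/-- `x` is nonatomic: for every `ε > 0` there is a finite partition of `ℕ`
all of whose pieces have `dsub x`-value at most `ε`. -/
def Nonatomic (x : ℕ → lp (fun _ : ℕ => ℝ) 1) : Prop :=
  ∀ ε : ℝ, 0 < ε → ∃ (m : ℕ) (A : Fin m → Set ℕ),
    (⋃ i, A i) = Set.univ ∧ Pairwise (Function.onFun Disjoint A) ∧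
    ∀ i, dsub x (A i) ≤ ε

noncomputable def e (j : ℕ) : lp (fun _ : ℕ => ℝ) 1 := lp.single 1 j 1

lemma e_def (j : ℕ) : e j = lp.single 1 j 1 := rfl

noncomputable def evalCLM (k : ℕ) : lp (fun _ : ℕ => ℝ) 1 →L[ℝ] ℝ :=
  LinearMap.mkContinuous
    { toFun := fun f => f k
      map_add' := fun f g => rfl
      map_smul' := fun c f => rfl }
    1 (fun f => by
      show ‖(f : ℕ → ℝ) k‖ ≤ 1 * ‖f‖; simpa using lp.norm_apply_le_norm one_ne_zero f k)

lemma key_hasSum (T : lp (fun _ : ℕ => ℝ) 1 →L[ℝ] lp (fun _ : ℕ => ℝ) 1)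
    (f : lp (fun _ : ℕ => ℝ) 1) (k : ℕ) :
    HasSum (fun j => f j * T (lp.single 1 j 1) k) (T f k) := by
  have h1 : HasSum (fun j : ℕ => lp.single 1 j (f j)) f :=
    lp.hasSum_single (by norm_num) f
  have h3 := ((evalCLM k).comp T).hasSum h1
  convert h3 using 2 with j
  have : lp.single (E := fun _ : ℕ => ℝ) 1 j (f j) = f j • lp.single (E := fun _ : ℕ => ℝ) 1 j (1 : ℝ) := by
    rw [← lp.single_smul]
    norm_num
  simp only [ContinuousLinearMap.coe_comp', Function.comp_apply, this, map_smul]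
  show f j * T (lp.single 1 j 1) k = evalCLM k (f j • T (lp.single 1 j 1))
  rw [map_smul]
  rfl
  rfl

lemma norm_eq_tsum_abs (f : lp (fun _ : ℕ => ℝ) 1) : HasSum (fun j => |f j|) ‖f‖ := by
  have := lp.hasSum_norm (p := 1) (by norm_num) f
  simpa using this

theorem stmt_16 (T : lp (fun _ : ℕ => ℝ) 1 →L[ℝ] lp (fun _ : ℕ => ℝ) 1)
    (hz : ∀ k : ℕ, Filter.Tendsto (fun n => T (lp.single 1 n 1) k)
      Filter.atTop (nhds 0)) :
    ∀ x : ℕ → lp (fun _ : ℕ => ℝ) 1, IsBddSeq x →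
      (∀ j : ℕ, Filter.Tendsto (fun n => x n j) Filter.atTop (nhds 0)) →
      IsBddSeq (fun n => T (x n)) ∧
      ∀ k : ℕ, Filter.Tendsto (fun n => T (x n) k) Filter.atTop (nhds 0) := by
  intro x hbd hx0
  obtain ⟨C0, hC0⟩ := hbd
  set C : ℝ := max C0 0 + 1 with hC
  have hCpos : 0 < C := by positivity
  have hxC : ∀ n, ‖x n‖ ≤ C := fun n =>
    (hC0 n).trans (by simp [hC]; linarith [le_max_left C0 0])
  constructor
  · exact ⟨‖T‖ * C, fun n => (T.le_opNorm (x n)).trans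
      (mul_le_mul_of_nonneg_left (hxC n) (norm_nonneg T))⟩
  intro k
  set a : ℕ → ℝ := fun j => T (lp.single 1 j 1) k with ha
  set M : ℝ := ‖T‖ + 1 with hM
  have hMpos : 0 < M := by positivity
  have habd : ∀ j, |a j| ≤ M := by
    intro j
    have h1 : ‖T (e j)‖ ≤ ‖T‖ * ‖e j‖ := T.le_opNorm _
    have h2 : ‖lp.single (E := fun _ : ℕ => ℝ) 1 j ((fun _ : ℕ => (1:ℝ)) j)‖ = ‖(1:ℝ)‖ :=
      lp.norm_single (E := fun _ : ℕ => ℝ) (p := 1) (by norm_num) j (1:ℝ)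
    have h3 : |a j| ≤ ‖T (e j)‖ := by
      show |T (e j) k| ≤ ‖T (e j)‖; simpa [Real.norm_eq_abs] using
        lp.norm_apply_le_norm (p := 1) one_ne_zero (T (e j)) k
    simp only [norm_one] at h2
    have h2' : ‖e j‖ = 1 := h2
    calc |a j| ≤ ‖T‖ * ‖e j‖ := h3.trans h1
      _ = ‖T‖ := by rw [h2']; ring
      _ ≤ M := by simp [hM]
  -- summability facts
  have hxsum : ∀ n, Summable (fun j => |x n j|) := fun n => (norm_eq_tsum_abs (x n)).summable
  have habs_sum : ∀ n, Summable (fun j => |x n j * a j|) := by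
    intro n
    refine Summable.of_nonneg_of_le (fun j => abs_nonneg _) (fun j => ?_)
      ((hxsum n).mul_right M)
    rw [abs_mul]
    exact mul_le_mul_of_nonneg_left (habd j) (abs_nonneg _)
  rw [Metric.tendsto_atTop]
  intro ε hε
  set δ : ℝ := ε / (2 * C) with hδ
  have hδpos : 0 < δ := by positivity
  obtain ⟨N, hN⟩ := (Metric.tendsto_atTop.mp (hz k)) δ hδpos
  have hNa : ∀ j, N ≤ j → |a j| ≤ δ := by
    intro j hj
    have := hN j hj
    rw [Real.dist_eq, sub_zero] at this
    exact this.le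
  -- finite sum tends to zero
  have hS : Tendsto (fun n => ∑ j ∈ Finset.range N, |x n j|) atTop (nhds 0) := by
    have : Tendsto (fun n => ∑ j ∈ Finset.range N, |x n j|) atTop
        (nhds (∑ j ∈ Finset.range N, (0:ℝ))) := by
      refine tendsto_finset_sum _ (fun j _ => ?_)
      simpa using (hx0 j).abs
    simpa using this
  obtain ⟨N2, hN2⟩ := (Metric.tendsto_atTop.mp hS) (ε / (2 * M)) (by positivity)
  refine ⟨N2, fun n hn => ?_⟩
  rw [Real.dist_eq, sub_zero]
  have hkey := key_hasSum T (x n) k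
  have htsum : T (x n) k = ∑' j, x n j * a j := hkey.tsum_eq.symm
  have hSn : ∑ j ∈ Finset.range N, |x n j| < ε / (2 * M) := by
    have := hN2 n hn
    rw [Real.dist_eq, sub_zero] at this
    exact lt_of_abs_lt this
  set Kc : Set ℕ := ((Finset.range N : Set ℕ))ᶜ with hKc
  have hsplit := Summable.sum_add_tsum_compl (s := Finset.range N) (habs_sum n)
  have h1 : |T (x n) k| ≤ ∑' j, |x n j * a j| := by
    rw [htsum]
    simpa only [Real.norm_eq_abs] using norm_tsum_le_tsum_norm (f := fun j => x n j * a j) (by simpa only [Real.norm_eq_abs] using habs_sum n)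
  have hterm1 : ∑ j ∈ Finset.range N, |x n j * a j| < ε / 2 := by
    calc ∑ j ∈ Finset.range N, |x n j * a j|
        ≤ ∑ j ∈ Finset.range N, |x n j| * M := by
          refine Finset.sum_le_sum (fun j _ => ?_)
          rw [abs_mul]
          exact mul_le_mul_of_nonneg_left (habd j) (abs_nonneg _)
      _ = (∑ j ∈ Finset.range N, |x n j|) * M := by rw [Finset.sum_mul]
      _ < (ε / (2 * M)) * M := by
          exact mul_lt_mul_of_pos_right hSn hMpos
      _ = ε / 2 := by field_simp
  have hterm2 : ∑' j : Kc, |x n j * a j| ≤ ε / 2 := by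
    have hsub : Summable (fun j : Kc => |x n j * a j|) :=
      (habs_sum n).subtype _
    have hsub2 : Summable (fun j : Kc => |x n (j:ℕ)| * δ) :=
      ((hxsum n).subtype _).mul_right δ
    calc ∑' j : Kc, |x n j * a j|
        ≤ ∑' j : Kc, |x n (j:ℕ)| * δ := by
          refine Summable.tsum_le_tsum (fun j => ?_) hsub hsub2
          rw [abs_mul]
          refine mul_le_mul_of_nonneg_left ?_ (abs_nonneg _)
          refine hNa (j : ℕ) ?_
          have hj2 : (j : ℕ) ∈ ((Finset.range N : Set ℕ))ᶜ := j.2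
          simp only [Set.mem_compl_iff, Finset.coe_range, Set.mem_Iio, not_lt] at hj2
          exact hj2
      _ = (∑' j : Kc, |x n (j:ℕ)|) * δ := by
          rw [tsum_mul_right]
      _ ≤ ‖x n‖ * δ := by
          refine mul_le_mul_of_nonneg_right ?_ hδpos.le
          rw [← (norm_eq_tsum_abs (x n)).tsum_eq]
          exact Summable.tsum_subtype_le (fun j => |x n j|) _ (fun j => abs_nonneg _) (hxsum n)
      _ ≤ C * δ := mul_le_mul_of_nonneg_right (hxC n) hδpos.le
      _ = ε / 2 := by rw [hδ]; field_simp
  calc |T (x n) k| ≤ ∑' j, |x n j * a j| := h1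
    _ = ∑ j ∈ Finset.range N, |x n j * a j|
        + ∑' j : Kc, |x n j * a j| := hsplit.symm
    _ < ε / 2 + ε / 2 := by
        exact add_lt_add_of_lt_of_le hterm1 hterm2
    _ = ε := by ring
end

section
/- Let x = (x_j) be a bounded nonatomic sequence in ℓ¹, and let H = (H_n) be a sequence of nonempty finite subsets of ℕ with |H_n| → ∞. Then the sequence y = (y_n) in ℓ¹ defined by y_n = |H_n|⁻¹ · ∑_{j ∈ H_n} x_j is nonatomic. In particular, taking H_n = {1, …, n}, the sequence of Cesàro means (n⁻¹ ∑_{j=1}^{n} x_j)_n is nonatomic. -/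
open Filter Set Topology

private lemma summable_abs' (f : lp (fun _ : ℕ => ℝ) 1) : Summable fun j => |f j| := by
  have := (lp.memℓp f).summable (p := 1) (by norm_num)
  simpa [Real.norm_eq_abs] using this

private lemma tsum_subtype_abs_le (f : lp (fun _ : ℕ => ℝ) 1) (A : Set ℕ) :
    ∑' j : A, |f j| ≤ ‖f‖ := by
  have hnorm : ‖f‖ = ∑' j, |f j| := by
    rw [lp.norm_eq_tsum_rpow (by norm_num) f]
    simp [Real.norm_eq_abs]
  rw [hnorm, tsum_subtype A (fun j => |f j|)]
  refine Summable.tsum_le_tsum (fun j => ?_) ?_ (summable_abs' f)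
  · exact Set.indicator_le_self' (fun _ _ => abs_nonneg _) j
  · exact (summable_abs' f).indicator A

private lemma avg_limsup_le (s a : ℕ → ℝ) (C : ℝ) (h0 : ∀ k, 0 ≤ s k) (hC : ∀ k, s k ≤ C)
    (H : ℕ → Finset ℕ) (hcard : Tendsto (fun n => (H n).card) atTop atTop)
    (ha0 : ∀ n, 0 ≤ a n)
    (ha : ∀ n, a n ≤ ((H n).card : ℝ)⁻¹ * ∑ k ∈ H n, s k)
    (L : ℝ) (hL : limsup s atTop ≤ L) :
    limsup a atTop ≤ L := by
  have hcob : IsCoboundedUnder (· ≤ ·) atTop a :=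
    isCoboundedUnder_le_of_le atTop (x := 0) ha0
  refine le_of_forall_pos_le_add fun δ hδ => ?_
  have hbdd : IsBoundedUnder (· ≤ ·) atTop s := isBoundedUnder_of ⟨C, hC⟩
  have h1 : ∀ᶠ k in atTop, s k < L + δ / 2 :=
    eventually_lt_of_limsup_lt (lt_of_le_of_lt hL (by linarith)) hbdd
  obtain ⟨N, hN⟩ := eventually_atTop.1 h1
  have hL2 : 0 ≤ L + δ / 2 := le_trans (h0 N) (le_of_lt (hN N le_rfl))
  have hC0 : 0 ≤ C := le_trans (h0 0) (hC 0)
  have hsum : ∀ n, ∑ k ∈ H n, s k ≤ N * C + (H n).card * (L + δ / 2) := by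
    intro n
    rw [← Finset.sum_filter_add_sum_filter_not (H n) (· < N) s]
    have h2 : ∑ k ∈ (H n).filter (· < N), s k ≤ N * C := by
      calc ∑ k ∈ (H n).filter (· < N), s k ≤ ∑ _k ∈ (H n).filter (· < N), C :=
            Finset.sum_le_sum fun k _ => hC k
        _ = ((H n).filter (· < N)).card * C := by rw [Finset.sum_const, nsmul_eq_mul]
        _ ≤ N * C := by
            refine mul_le_mul_of_nonneg_right ?_ hC0
            have : (H n).filter (· < N) ⊆ Finset.range N := fun k hk => by
              simp only [Finset.mem_filter] at hk
              exact Finset.mem_range.2 hk.2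
            exact_mod_cast (Finset.card_le_card this).trans_eq (Finset.card_range N)
    have h3 : ∑ k ∈ (H n).filter (fun k => ¬ k < N), s k ≤ (H n).card * (L + δ / 2) := by
      calc ∑ k ∈ (H n).filter (fun k => ¬ k < N), s k
          ≤ ∑ _k ∈ (H n).filter (fun k => ¬ k < N), (L + δ / 2) :=
            Finset.sum_le_sum fun k hk => by
              simp only [Finset.mem_filter, not_lt] at hk
              exact le_of_lt (hN k hk.2)
        _ = ((H n).filter (fun k => ¬ k < N)).card * (L + δ / 2) := by
            rw [Finset.sum_const, nsmul_eq_mul]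
        _ ≤ (H n).card * (L + δ / 2) := by
            refine mul_le_mul_of_nonneg_right ?_ hL2
            exact_mod_cast Finset.card_filter_le _ _
    linarith
  have hcardR : Tendsto (fun n => ((H n).card : ℝ)) atTop atTop :=
    tendsto_natCast_atTop_atTop.comp hcard
  have hdiv : Tendsto (fun n => (N * C) / ((H n).card : ℝ)) atTop (𝓝 0) :=
    Tendsto.div_atTop tendsto_const_nhds hcardR
  have hev : ∀ᶠ n in atTop, (N * C) / ((H n).card : ℝ) ≤ δ / 2 :=
    hdiv.eventually (eventually_le_nhds (by linarith))
  refine limsup_le_of_le hcob ?_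
  filter_upwards [hev, hcard.eventually_ge_atTop 1] with n h1n h2n
  have hcpos : (0 : ℝ) < (H n).card := by exact_mod_cast Nat.lt_of_lt_of_le Nat.zero_lt_one h2n
  have : a n ≤ ((H n).card : ℝ)⁻¹ * (N * C + (H n).card * (L + δ / 2)) :=
    (ha n).trans (mul_le_mul_of_nonneg_left (hsum n) (inv_nonneg.2 hcpos.le))
  have heq : ((H n).card : ℝ)⁻¹ * (N * C + (H n).card * (L + δ / 2))
      = (N * C) / ((H n).card : ℝ) + (L + δ / 2) := by
    field_simp
  rw [heq] at this
  linarith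

private lemma key (x : ℕ → lp (fun _ : ℕ => ℝ) 1) (hx : IsBddSeq x)
    (hnx : Nonatomic x) (H : ℕ → Finset ℕ)
    (hcard : Tendsto (fun n => (H n).card) atTop atTop) :
    Nonatomic (fun n => ((H n).card : ℝ)⁻¹ • ∑ j ∈ H n, x j) := by
  obtain ⟨C, hC⟩ := hx
  intro ε hε
  obtain ⟨m, A, hcov, hdisj, hdsub⟩ := hnx ε hε
  refine ⟨m, A, hcov, hdisj, fun i => ?_⟩
  set s : ℕ → ℝ := fun k => ∑' j : A i, |x k j| with hs
  set a : ℕ → ℝ := fun n => ∑' j : A i, |(((H n).card : ℝ)⁻¹ • ∑ j ∈ H n, x j) j| with hay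
  have h0 : ∀ k, 0 ≤ s k := fun k => tsum_nonneg fun j => abs_nonneg _
  have hsC : ∀ k, s k ≤ C := fun k => (tsum_subtype_abs_le (x k) (A i)).trans (hC k)
  have ha0 : ∀ n, 0 ≤ a n := fun n => tsum_nonneg fun j => abs_nonneg _
  have ha : ∀ n, a n ≤ ((H n).card : ℝ)⁻¹ * ∑ k ∈ H n, s k := by
    intro n
    set c : ℝ := ((H n).card : ℝ)⁻¹ with hc
    have hc0 : 0 ≤ c := inv_nonneg.2 (Nat.cast_nonneg _)
    have hsumm : ∀ k, Summable fun j : A i => |x k j| := fun k =>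
      (summable_abs' (x k)).subtype (A i)
    have hptw : ∀ j : A i, |(c • ∑ k ∈ H n, x k) (j : ℕ)| ≤ c * ∑ k ∈ H n, |x k j| := by
      intro j
      have h1 : (c • ∑ k ∈ H n, x k) (j : ℕ) = c * ∑ k ∈ H n, x k j := by
        rw [lp.coeFn_smul, Pi.smul_apply, smul_eq_mul]
        congr 1
        simp [lp.coeFn_sum]
        exact Finset.sum_apply _ _ _
      rw [h1, abs_mul, abs_of_nonneg hc0]
      exact mul_le_mul_of_nonneg_left (Finset.abs_sum_le_sum_abs _ _) hc0
    calc a n ≤ ∑' j : A i, c * ∑ k ∈ H n, |x k j| := by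
          refine Summable.tsum_le_tsum hptw ((summable_abs' _).subtype (A i)) ?_
          exact (Summable.mul_left c (summable_sum fun k _ => hsumm k))
      _ = c * ∑' j : A i, ∑ k ∈ H n, |x k j| := tsum_mul_left
      _ = c * ∑ k ∈ H n, ∑' j : A i, |x k j| := by
          rw [Summable.tsum_finsetSum fun k _ => hsumm k]
      _ = c * ∑ k ∈ H n, s k := rfl
  exact avg_limsup_le s a C h0 hsC H hcard ha0 ha ε (hdsub i)

theorem stmt_19 (x : ℕ → lp (fun _ : ℕ => ℝ) 1) (hx : IsBddSeq x)
    (hnx : Nonatomic x)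
    (H : ℕ → Finset ℕ) (hne : ∀ n, (H n).Nonempty)
    (hcard : Filter.Tendsto (fun n => (H n).card) Filter.atTop Filter.atTop) :
    Nonatomic (fun n => ((H n).card : ℝ)⁻¹ • ∑ j ∈ H n, x j) ∧
    Nonatomic (fun n => ((n : ℝ))⁻¹ • ∑ j ∈ Finset.Icc 1 n, x j) := by
  refine ⟨key x hx hnx H hcard, ?_⟩
  have heq : (fun n : ℕ => ((n : ℝ))⁻¹ • ∑ j ∈ Finset.Icc 1 n, x j)
      = fun n : ℕ => (((Finset.Icc 1 n).card : ℝ))⁻¹ • ∑ j ∈ Finset.Icc 1 n, x j := by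
    funext n
    simp [Nat.card_Icc]
  rw [heq]
  exact key x hx hnx _ (by simp only [Nat.card_Icc, Nat.add_sub_cancel]; exact tendsto_id)
end
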